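/- Let T be a tree of order at least 2 and let v be a leaf of T. Then there exists a minimum super dominating set S of T such that v ∉ S (equivalently, v lies in the complement S̄). -/

import Mathlib

open SimpleGraph

/-- `S` is a super dominating set of `G`: every vertex `u ∉ S` has some `v ∈ S`
with `N(v) ∩ Sᶜ = {u}`. -/
def SuperDomSet {V : Type} (G : SimpleGraph V) (S : Set V) : Prop :=
  ∀ u ∈ Sᶜ, ∃ v ∈ S, G.neighborSet v ∩ Sᶜ = {u}

/-- The super domination number `γ_sp(G)`. -/
noncomputable def superDomNum {V : Type} (G : SimpleGraph V) : ℕ :=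
  sInf {n | ∃ S : Set V, SuperDomSet G S ∧ S.ncard = n}

/-- `S` is a dominating set of `G`. -/
def DomSet {V : Type} (G : SimpleGraph V) (S : Set V) : Prop :=
  ∀ u ∉ S, ∃ v ∈ S, G.Adj v u

/-- The domination number `γ(G)`. -/
noncomputable def domNum {V : Type} (G : SimpleGraph V) : ℕ :=
  sInf {n | ∃ S : Set V, DomSet G S ∧ S.ncard = n}

/-- `S` is a total dominating set of `G`: every vertex has a neighbor in `S`. -/
def TotalDomSet {V : Type} (G : SimpleGraph V) (S : Set V) : Prop :=
  ∀ u : V, ∃ v ∈ S, G.Adj v u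

/-- The total domination number `γ_t(G)`. -/
noncomputable def totalDomNum {V : Type} (G : SimpleGraph V) : ℕ :=
  sInf {n | ∃ S : Set V, TotalDomSet G S ∧ S.ncard = n}

/-- A leaf is a vertex of degree 1. -/
def IsLeaf {V : Type} (G : SimpleGraph V) (v : V) : Prop :=
  (G.neighborSet v).ncard = 1

/-- A support vertex is a vertex adjacent to a leaf. -/
def IsSupport {V : Type} (G : SimpleGraph V) (v : V) : Prop :=
  ∃ u, G.Adj v u ∧ IsLeaf G u

namespace LeafAvoidAux

variable {V : Type}

/-- The cascade closure used in the exchange argument. -/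
inductive InX (T : SimpleGraph V) (D : Set V) (f : V → V) (w : V) : V → Prop
  | base {x : V} (hx : x ∈ D) (hxw : x ∈ insert w (T.neighborSet w)) : InX T D f w x
  | adj {x u : V} (hx : InX T D f w x) (hg : f x ∉ insert w (T.neighborSet w))
      (hu : u ∈ D) (ha : T.Adj u x) : InX T D f w u
  | fadj {x u : V} (hx : InX T D f w x) (hg : f x ∉ insert w (T.neighborSet w))
      (hu : u ∈ D) (ha : T.Adj (f u) (f x)) : InX T D f w u

variable {T : SimpleGraph V} {D : Set V} {f : V → V} {w : V}

lemma InX.mem_D {x : V} (h : InX T D f w x) : x ∈ D := by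
  cases h with
  | base hx _ => exact hx
  | adj _ _ hu _ => exact hu
  | fadj _ _ hu _ => exact hu

lemma not_mem_concat {a b c : V} {p : T.Walk a b} (h : T.Adj b c)
    (hw1 : w ∉ p.support) (hw2 : w ≠ c) : w ∉ (p.concat h).support := by
  rw [Walk.support_concat]
  simp only [List.mem_append, List.mem_singleton]
  rintro (hmem | hmem)
  · exact hw1 hmem
  · exact hw2 hmem

/-- In an acyclic graph there is no walk avoiding `w` between two distinct
neighbors of `w`. -/
lemma no_detour (hac : T.IsAcyclic) {z a : V} (hwz : T.Adj w z) (hwa : T.Adj w a)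
    (hza : z ≠ a) (q : T.Walk z a) (hw : w ∉ q.support) : False := by
  letI : DecidableEq V := Classical.decEq V
  have hp := q.bypass_isPath
  have hsup : w ∉ q.bypass.support := fun h => hw (q.support_bypass_subset h)
  have P2 : (Walk.cons hwz q.bypass).IsPath := hp.cons hsup
  have hEq := isAcyclic_iff_path_unique.mp hac ⟨_, P2⟩ (Path.singleton hwa)
  have hlen : (Walk.cons hwz q.bypass).length = (Walk.cons hwa Walk.nil).length := by
    have := congrArg (fun (p : T.Path w a) => p.1.length) hEq
    simpa [Path.singleton] using this
  simp only [Walk.length_cons, Walk.length_nil] at hlen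
  have h0 : q.bypass.length = 0 := by omega
  exact hza (Walk.eq_of_length_eq_zero h0)

section

variable (hf : ∀ u ∈ D, f u ∉ D ∧ T.neighborSet (f u) ∩ D = {u})

include hf

lemma mem_nf {u : V} (hu : u ∈ D) : u ∈ T.neighborSet (f u) ∩ D := by
  rw [(hf u hu).2]; rfl

lemma adj_f {u : V} (hu : u ∈ D) : T.Adj (f u) u := (mem_nf hf hu).1

lemma f_injOn : Set.InjOn f D := by
  intro a ha b hb hab
  have h1 : a ∈ T.neighborSet (f b) ∩ D := by rw [← hab]; exact mem_nf hf ha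
  rw [(hf b hb).2] at h1
  exact h1

/-- For good elements of the closure, there is a walk from a neighbor of `w`
avoiding `w`. -/
lemma walk_of_good (hwD : w ∉ D) {x : V} (hx : InX T D f w x) :
    f x ∉ insert w (T.neighborSet w) →
    ∃ z, z ∈ D ∧ T.Adj w z ∧ ∃ q : T.Walk z x, w ∉ q.support := by
  induction hx with
  | @base x hx hxw =>
    intro _
    have hxne : x ≠ w := fun h => hwD (h ▸ hx)
    have hadj : T.Adj w x := by
      rcases Set.mem_insert_iff.mp hxw with h | h
      · exact absurd h hxne
      · exact h
    exact ⟨x, hx, hadj, Walk.nil, by simp [hxne.symm]⟩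
  | @adj y u hy hg hu ha ih =>
    intro _
    obtain ⟨z, hz, hwz, q, hq⟩ := ih hg
    exact ⟨z, hz, hwz, q.concat ha.symm,
      not_mem_concat _ hq (fun h => hwD (h ▸ hu))⟩
  | @fadj y u hy hg hu ha ih =>
    intro hgu
    obtain ⟨z, hz, hwz, q, hq⟩ := ih hg
    refine ⟨z, hz, hwz, ((q.concat (adj_f hf hy.mem_D).symm).concat ha.symm).concat
      (adj_f hf hu), ?_⟩
    refine not_mem_concat _ (not_mem_concat _ (not_mem_concat _ hq ?_) ?_)
      (fun h => hwD (h ▸ hu))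
    · exact fun h => hg (h ▸ Set.mem_insert _ _)
    · exact fun h => hgu (h ▸ Set.mem_insert _ _)

/-- A bad element of the closure must map to `w` itself (when `w ∉ D`). -/
lemma bad_eq_w (hac : T.IsAcyclic) (hwD : w ∉ D) {x : V} (hx : InX T D f w x)
    (hbad : f x ∈ insert w (T.neighborSet w)) : f x = w := by
  by_contra hne
  have hwa : T.Adj w (f x) := by
    rcases Set.mem_insert_iff.mp hbad with h | h
    · exact absurd h hne
    · exact h
  have hxD := hx.mem_D
  have hfxD : f x ∉ D := (hf x hxD).1
  obtain ⟨z, hz, hwz, W, hW⟩ :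
      ∃ z, z ∈ D ∧ T.Adj w z ∧ ∃ q : T.Walk z (f x), w ∉ q.support := by
    cases hx with
    | base hx' hxw =>
      have hxne : x ≠ w := fun h => hwD (h ▸ hx')
      have hadj : T.Adj w x := by
        rcases Set.mem_insert_iff.mp hxw with h | h
        · exact absurd h hxne
        · exact h
      refine ⟨x, hx', hadj, Walk.cons (adj_f hf hx').symm Walk.nil, ?_⟩
      simp only [Walk.support_cons, Walk.support_nil, List.mem_cons,
        List.not_mem_nil, or_false]
      push_neg
      exact ⟨hxne.symm, fun h => hne h.symm⟩
    | @adj y _ hy hg hu ha =>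
      obtain ⟨z, hz, hwz, q, hq⟩ := walk_of_good hf hwD hy hg
      exact ⟨z, hz, hwz, (q.concat ha.symm).concat (adj_f hf hxD).symm,
        not_mem_concat _ (not_mem_concat _ hq (fun h => hwD (h ▸ hxD)))
          (fun h => hne h.symm)⟩
    | @fadj y _ hy hg hu ha =>
      obtain ⟨z, hz, hwz, q, hq⟩ := walk_of_good hf hwD hy hg
      exact ⟨z, hz, hwz, (q.concat (adj_f hf hy.mem_D).symm).concat ha.symm,
        not_mem_concat _ (not_mem_concat _ hq
          (fun h => hg (h ▸ Set.mem_insert _ _))) (fun h => hne h.symm)⟩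
  exact no_detour hac hwz hwa (fun h => hfxD (h ▸ hz)) W hW

/-- The key exchange lemma: from any "nice" set `D` one can produce a nice set
avoiding the closed neighborhood of `w`, losing at most one element. -/
lemma cstar [Fintype V] (hac : T.IsAcyclic) :
    ∃ D' : Set V, (∀ u ∈ D', ∃ x, x ∉ D' ∧ T.neighborSet x ∩ D' = {u}) ∧
      D' ∩ insert w (T.neighborSet w) = ∅ ∧ D.ncard ≤ D'.ncard + 1 := by
  classical
  set Nw : Set V := insert w (T.neighborSet w) with hNw
  set X : Set V := {x | InX T D f w x} with hX
  set Xg : Set V := {x ∈ X | f x ∉ Nw} with hXg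
  set Xb : Set V := {x ∈ X | f x ∈ Nw} with hXb
  set F : Set V := f '' Xg with hF
  have hXD : X ⊆ D := fun x hx => InX.mem_D hx
  have hXgD : Xg ⊆ D := fun x hx => hXD hx.1
  have hFD : ∀ a ∈ F, a ∉ D := by
    rintro a ⟨x, hx, rfl⟩
    exact (hf x (hXgD hx)).1
  refine ⟨(D \ X) ∪ F, ?_, ?_, ?_⟩
  · -- niceness
    rintro u (⟨huD, huX⟩ | ⟨x, hx, rfl⟩)
    · -- u ∈ D \ X, witness f u
      refine ⟨f u, ?_, ?_⟩
      · rintro (⟨hfD, _⟩ | ⟨y, hy, hxy⟩)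
        · exact (hf u huD).1 hfD
        · exact huX (f_injOn hf (hXgD hy) huD hxy ▸ hy.1)
      · ext z
        simp only [Set.mem_inter_iff, Set.mem_singleton_iff]
        constructor
        · rintro ⟨hzn, (⟨hzD, _⟩ | ⟨y, hy, rfl⟩)⟩
          · have h : z ∈ T.neighborSet (f u) ∩ D := ⟨hzn, hzD⟩
            rw [(hf u huD).2] at h
            exact h
          · exact absurd (InX.fadj hy.1 hy.2 huD hzn) huX
        · rintro rfl
          exact ⟨(mem_nf hf huD).1, Or.inl ⟨huD, huX⟩⟩
    · -- u = f x with x ∈ Xg, witness x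
      refine ⟨x, ?_, ?_⟩
      · rintro (⟨_, hxX⟩ | ⟨y, hy, hxy⟩)
        · exact hxX hx.1
        · exact (hf y (hXgD hy)).1 (hxy ▸ hXgD hx)
      · ext z
        simp only [Set.mem_inter_iff, Set.mem_singleton_iff]
        constructor
        · rintro ⟨hzn, (⟨hzD, hzX⟩ | ⟨y, hy, rfl⟩)⟩
          · exact absurd (InX.adj hx.1 hx.2 hzD hzn.symm) hzX
          · have h : x ∈ T.neighborSet (f y) ∩ D := ⟨hzn.symm, hXgD hx⟩
            rw [(hf y (hXgD hy)).2] at h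
            rw [h]
        · rintro rfl
          exact ⟨(adj_f hf (hXgD hx)).symm, Or.inr ⟨x, hx, rfl⟩⟩
  · -- avoidance
    ext z
    simp only [Set.mem_inter_iff, Set.mem_empty_iff_false, iff_false, not_and]
    rintro (⟨hzD, hzX⟩ | ⟨y, hy, rfl⟩)
    · exact fun hzN => hzX (InX.base hzD hzN)
    · exact hy.2
  · -- cardinality
    have hXgXb : Xg ∪ Xb = X := by
      ext z
      simp only [hXg, hXb, Set.mem_union, Set.mem_setOf_eq, Set.mem_sep_iff]
      constructor
      · rintro (h | h) <;> exact h.1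
      · intro h
        by_cases hz : f z ∈ Nw
        · exact Or.inr ⟨h, hz⟩
        · exact Or.inl ⟨h, hz⟩
    have hdisj1 : Disjoint Xg Xb := by
      rw [Set.disjoint_left]
      rintro z ⟨_, h1⟩ ⟨_, h2⟩
      exact h1 h2
    have hdisj2 : Disjoint (D \ X) F := by
      rw [Set.disjoint_left]
      rintro z ⟨hzD, _⟩ hzF
      exact hFD z hzF hzD
    have hb1 : Xb.ncard ≤ 1 := by
      by_cases hwD : w ∈ D
      · have hsub : Xb ⊆ {w} := by
          rintro x ⟨hxX, hxN⟩
          have hxD := InX.mem_D hxX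
          rcases Set.mem_insert_iff.mp hxN with h | h
          · exact absurd (h ▸ hwD) (hf x hxD).1
          · have h2 : w ∈ T.neighborSet (f x) ∩ D := ⟨h.symm, hwD⟩
            rw [(hf x hxD).2] at h2
            exact Set.mem_singleton_iff.mpr h2.symm
        calc Xb.ncard ≤ ({w} : Set V).ncard := Set.ncard_le_ncard hsub (Set.toFinite _)
          _ = 1 := Set.ncard_singleton w
      · rw [Set.ncard_le_one_iff (Set.toFinite _)]
        rintro a b ⟨haX, haN⟩ ⟨hbX, hbN⟩
        have ha := bad_eq_w hf hac hwD haX haN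
        have hb := bad_eq_w hf hac hwD hbX hbN
        exact f_injOn hf (InX.mem_D haX) (InX.mem_D hbX) (ha.trans hb.symm)
    have hU : ((D \ X) ∪ F).ncard = (D \ X).ncard + F.ncard :=
      Set.ncard_union_eq hdisj2 (Set.toFinite _) (Set.toFinite _)
    have hDX : (D \ X).ncard = D.ncard - X.ncard := Set.ncard_diff hXD (Set.toFinite _)
    have hXle : X.ncard ≤ D.ncard := Set.ncard_le_ncard hXD (Set.toFinite _)
    have hFX : F.ncard = Xg.ncard :=
      Set.ncard_image_of_injOn ((f_injOn hf).mono hXgD)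
    have hXsum : Xg.ncard + Xb.ncard = X.ncard := by
      rw [← Set.ncard_union_eq hdisj1 (Set.toFinite _) (Set.toFinite _), hXgXb]
    omega

end

end LeafAvoidAux

/-- For every leaf `v` of a tree of order at least 2 there is a minimum super dominating
set avoiding `v`. -/
theorem exists_min_superDomSet_avoiding_leaf {V : Type} [Fintype V]
    (T : SimpleGraph V) (hT : T.IsTree) (hcard : 2 ≤ Fintype.card V)
    (v : V) (hv : IsLeaf T v) :
    ∃ S : Set V, SuperDomSet T S ∧ S.ncard = superDomNum T ∧ v ∉ S := by
  classical
  obtain ⟨w, hw⟩ : ∃ w, T.neighborSet v = {w} := Set.ncard_eq_one.mp hv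
  have hvw : T.Adj v w := by
    have h : w ∈ T.neighborSet v := by rw [hw]; rfl
    exact h
  -- the set of sizes of super dominating sets is nonempty
  have hne : {n | ∃ S : Set V, SuperDomSet T S ∧ S.ncard = n}.Nonempty :=
    ⟨(Set.univ : Set V).ncard, Set.univ, fun u hu => absurd hu (by simp), rfl⟩
  obtain ⟨S₀, hS₀, hcard₀⟩ := Nat.sInf_mem hne
  set D : Set V := S₀ᶜ with hD
  -- choose the private dominator function
  have hch : ∀ u : V, ∃ x : V, u ∈ D → x ∉ D ∧ T.neighborSet x ∩ D = {u} := by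
    intro u
    by_cases hu : u ∈ D
    · obtain ⟨x, hx1, hx2⟩ := hS₀ u hu
      exact ⟨x, fun _ => ⟨fun hc => hc hx1, hx2⟩⟩
    · exact ⟨u, fun h => absurd h hu⟩
  choose f hf using hch
  have hf' : ∀ u ∈ D, f u ∉ D ∧ T.neighborSet (f u) ∩ D = {u} := fun u hu => hf u hu
  obtain ⟨D', hnice, hav, hsize⟩ := LeafAvoidAux.cstar (w := w) hf' hT.IsAcyclic
  have havl : ∀ z ∈ D', z ∉ insert w (T.neighborSet w) := by
    intro z hz hzN
    have h : z ∈ D' ∩ insert w (T.neighborSet w) := ⟨hz, hzN⟩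
    rw [hav] at h
    exact h
  have hvD' : v ∉ D' := fun h => havl v h (Set.mem_insert_of_mem _ hvw.symm)
  have hwD' : w ∉ D' := fun h => havl w h (Set.mem_insert _ _)
  set S' : Set V := (insert v D')ᶜ with hS'
  have hS'c : S'ᶜ = insert v D' := by rw [hS', compl_compl]
  -- S' is a super dominating set
  have hsuper : SuperDomSet T S' := by
    intro u hu
    rw [hS'c] at hu
    rcases Set.mem_insert_iff.mp hu with hcase | huD'
    · -- u = v, dominated by w
      subst hcase
      refine ⟨w, ?_, ?_⟩
      · intro hc
        rcases Set.mem_insert_iff.mp hc with h | h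
        · exact hvw.ne' h
        · exact hwD' h
      · rw [hS'c]
        ext z
        simp only [Set.mem_inter_iff, Set.mem_singleton_iff]
        constructor
        · rintro ⟨hzn, hz⟩
          rcases Set.mem_insert_iff.mp hz with h | hz
          · exact h
          · exact absurd (Set.mem_insert_of_mem _ hzn) (havl z hz)
        · rintro rfl
          exact ⟨hvw.symm, Set.mem_insert _ _⟩
    · -- u ∈ D'
      obtain ⟨x, hxD', hxn⟩ := hnice u huD'
      have humem : u ∈ T.neighborSet x ∩ D' := by rw [hxn]; rfl
      have hxv : x ≠ v := by
        intro h
        subst h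
        have h1 : u ∈ T.neighborSet x := humem.1
        rw [hw, Set.mem_singleton_iff] at h1
        exact havl u humem.2 (h1 ▸ Set.mem_insert _ _)
      refine ⟨x, ?_, ?_⟩
      · intro hc
        rcases Set.mem_insert_iff.mp hc with h | h
        · exact hxv h
        · exact hxD' h
      · rw [hS'c]
        ext z
        simp only [Set.mem_inter_iff, Set.mem_singleton_iff]
        constructor
        · rintro ⟨hzn, hz⟩
          rcases Set.mem_insert_iff.mp hz with hzv | hz
          · -- z = v adjacent to x forces x = w, contradiction
            exfalso
            have h1 : x ∈ T.neighborSet v := by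
              have h2 : T.Adj x v := hzv ▸ hzn
              exact h2.symm
            rw [hw, Set.mem_singleton_iff] at h1
            exact havl u humem.2 (Set.mem_insert_of_mem _ (h1 ▸ humem.1))
          · have h : z ∈ T.neighborSet x ∩ D' := ⟨hzn, hz⟩
            rw [hxn] at h
            exact h
        · rintro rfl
          exact ⟨humem.1, Set.mem_insert_of_mem _ humem.2⟩
  -- cardinality computations
  have h1 : S₀.ncard + D.ncard = Nat.card V :=
    Set.ncard_add_ncard_compl S₀ (Set.toFinite _) (Set.toFinite _)
  have h2 : (insert v D').ncard + S'.ncard = Nat.card V := by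
    have h := Set.ncard_add_ncard_compl (insert v D') (Set.toFinite _) (Set.toFinite _)
    rw [← hS'] at h
    exact h
  have h3 : (insert v D').ncard = D'.ncard + 1 :=
    Set.ncard_insert_of_notMem hvD' (Set.toFinite _)
  have hle : superDomNum T ≤ S'.ncard := Nat.sInf_le ⟨S', hsuper, rfl⟩
  have hge : S'.ncard ≤ superDomNum T := by
    have hγ : superDomNum T = S₀.ncard := hcard₀.symm
    omega
  refine ⟨S', hsuper, le_antisymm hge hle, ?_⟩
  intro hvS'
  exact hvS' (Set.mem_insert _ _)
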